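/- arXiv:1903.07407 — 2 statements merged into one kernel-verified Lean document; each statement's English description precedes it below -/
import Mathlib

section
/- ∫₀^{ϖ/2} sl(t) dt = π/4. -/
open Set MeasureTheory Filter

/-- Generalized arcsine: `arcsin_{p,q}(x) = ∫₀ˣ (1 - tᵠ)^(-1/p) dt`. -/
noncomputable def gArcsin (p q x : ℝ) : ℝ := ∫ t in (0:ℝ)..x, (1 - t ^ q) ^ (-(1 / p))

/-- Generalized pi: `π_{p,q} = 2 ∫₀¹ (1 - tᵠ)^(-1/p) dt`. -/
noncomputable def gPi (p q : ℝ) : ℝ := 2 * gArcsin p q 1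

/-- `S` is the generalized sine `sin_{p,q}` (the inverse of `gArcsin p q` on `[0,1]`). -/
def IsGSin (p q : ℝ) (S : ℝ → ℝ) : Prop :=
  ∀ y ∈ Icc (0:ℝ) 1, S (gArcsin p q y) = y

/-- `C` is the generalized cosine `cos_{p,q}`, the derivative of `S = sin_{p,q}`
on `[0, π_{p,q}/2]`. -/
def IsGCos (p q : ℝ) (S C : ℝ → ℝ) : Prop :=
  ∀ x ∈ Icc (0:ℝ) (gPi p q / 2), HasDerivWithinAt S (C x) (Icc (0:ℝ) (gPi p q / 2)) x

/-- The lemniscatic integrand `(1 - t⁴)^(-1/2)`. -/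
noncomputable def lemG : ℝ → ℝ := fun t => (1 - t ^ 4) ^ (-(1/2) : ℝ)

lemma lemG_eq (t : ℝ) : (1 - t ^ (4:ℝ)) ^ (-(1 / (2:ℝ))) = lemG t := by
  have h4 : t ^ (4:ℝ) = t ^ (4:ℕ) := by
    rw [show (4:ℝ) = ((4:ℕ):ℝ) by norm_num, Real.rpow_natCast]
  rw [lemG, h4]

lemma gArcsin_eq (x : ℝ) : gArcsin 2 4 x = ∫ t in (0:ℝ)..x, lemG t := by
  unfold gArcsin
  exact intervalIntegral.integral_congr fun t _ => lemG_eq t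

lemma lemG_int : IntervalIntegrable lemG volume 0 1 := by
  have base : IntervalIntegrable (fun t : ℝ => (1 - t) ^ (-(1/2) : ℝ)) volume 0 1 := by
    have h := (intervalIntegral.intervalIntegrable_rpow' (a := 0) (b := 1) (r := -(1/2)) (by norm_num)).comp_sub_left 1
    simpa using h.symm
  refine base.mono_fun ?_ ?_
  · apply Measurable.aestronglyMeasurable
    unfold lemG
    fun_prop
  · rw [uIoc_of_le (by norm_num : (0:ℝ) ≤ 1)]
    filter_upwards [ae_restrict_mem measurableSet_Ioc] with t ht
    have ht0 : 0 ≤ t := ht.1.le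
    have ht1 : t ≤ 1 := ht.2
    have ht4 : t ^ 4 ≤ 1 := pow_le_one₀ ht0 ht1
    have h40 : (0:ℝ) ≤ 1 - t ^ 4 := by linarith
    have h10 : (0:ℝ) ≤ 1 - t := by linarith
    simp only [lemG]
    rw [Real.norm_eq_abs, Real.norm_eq_abs, abs_of_nonneg (Real.rpow_nonneg h40 _),
      abs_of_nonneg (Real.rpow_nonneg h10 _)]
    rcases eq_or_lt_of_le ht1 with h | h
    · subst h
      norm_num [Real.zero_rpow (by norm_num : -(1/2 : ℝ) ≠ 0)]
    · have hlt : (0:ℝ) < 1 - t := by linarith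
      have h4t : t ^ 4 ≤ t := pow_le_of_le_one ht0 ht1 (by norm_num)
      have hle : 1 - t ≤ 1 - t ^ 4 := by linarith
      exact Real.rpow_le_rpow_of_nonpos hlt hle (by norm_num)

lemma lemG_int' {y : ℝ} (hy : y ∈ Icc (0:ℝ) 1) : IntervalIntegrable lemG volume 0 y :=
  lemG_int.mono_set (by
    rw [uIcc_of_le hy.1, uIcc_of_le (by norm_num : (0:ℝ) ≤ 1)]
    exact Icc_subset_Icc le_rfl hy.2)

/-- Corollary 3.3, second part: `∫₀^{ϖ/2} sl(t) dt = π/4`, where `sl = sin_{2,4}`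
is the lemniscate sine and `ϖ = π_{2,4}` is the lemniscate constant. -/
theorem stmt_7 (S : ℝ → ℝ) (hS : IsGSin 2 4 S) :
    ∫ t in (0:ℝ)..(gPi 2 4 / 2), S t = Real.pi / 4 := by
  set F : ℝ → ℝ := fun y => ∫ t in (0:ℝ)..y, lemG t with hF
  have hSF : ∀ y ∈ Icc (0:ℝ) 1, S (F y) = y := fun y hy => by
    show S (∫ t in (0:ℝ)..y, lemG t) = y
    rw [← gArcsin_eq]; exact hS y hy
  have hF0 : F 0 = 0 := intervalIntegral.integral_same
  have hFc : gPi 2 4 / 2 = F 1 := by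
    rw [gPi, gArcsin_eq]; ring
  set c : ℝ := gPi 2 4 / 2 with hc
  -- continuity of F
  have contF : ContinuousOn F (Icc 0 1) := by
    have := intervalIntegral.continuousOn_primitive_interval
      (a := 0) (b := 1) (μ := volume) (f := lemG)
      (by rw [uIcc_of_le (by norm_num : (0:ℝ) ≤ 1)]
          exact (intervalIntegrable_iff_integrableOn_Icc_of_le (by norm_num)).1 lemG_int)
    rwa [uIcc_of_le (by norm_num : (0:ℝ) ≤ 1)] at this
  -- strict monotonicity of F
  have hsm : StrictMonoOn F (Icc 0 1) := by
    intro a ha b hb hab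
    have hint_ab : IntervalIntegrable lemG volume a b :=
      lemG_int.mono_set (by
        rw [uIcc_of_le hab.le, uIcc_of_le (by norm_num : (0:ℝ) ≤ 1)]
        exact Icc_subset_Icc ha.1 hb.2)
    have hpos : 0 < ∫ x in a..b, lemG x := by
      refine intervalIntegral.intervalIntegral_pos_of_pos_on hint_ab (fun x hx => ?_) hab
      have hx0 : 0 ≤ x := le_trans ha.1 hx.1.le
      have hx1 : x < 1 := lt_of_lt_of_le hx.2 hb.2
      have hx4 : x ^ 4 < 1 := pow_lt_one₀ hx0 hx1 (by norm_num)
      have : (0:ℝ) < 1 - x ^ 4 := by linarith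
      exact Real.rpow_pos_of_pos this _
    have hsum : F a + ∫ x in a..b, lemG x = F b :=
      intervalIntegral.integral_add_adjacent_intervals (lemG_int' ha) hint_ab
    linarith
  have hmono : MonotoneOn F (Icc 0 1) := hsm.monotoneOn
  -- image of F
  have himg : F '' Icc 0 1 = Icc 0 c := by
    apply Subset.antisymm
    · rintro _ ⟨y, hy, rfl⟩
      refine ⟨?_, ?_⟩
      · rw [← hF0]; exact hmono (left_mem_Icc.mpr (by norm_num)) hy hy.1
      · rw [hFc]; exact hmono hy (right_mem_Icc.mpr (by norm_num)) hy.2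
    · have := intermediate_value_Icc (by norm_num : (0:ℝ) ≤ 1) contF
      rw [hF0, ← hFc] at this
      exact this
  -- continuity of S on [0, c]
  have hScont : ContinuousOn S (Icc 0 c) := by
    let e : (Icc (0:ℝ) 1) ≃o (Icc (0:ℝ) c) :=
      (StrictMonoOn.orderIso F _ hsm).trans (OrderIso.setCongr _ _ himg)
    have hecoe : ∀ y : Icc (0:ℝ) 1, ((e y : Icc (0:ℝ) c) : ℝ) = F y := fun y => rfl
    rw [continuousOn_iff_continuous_restrict]
    have hres : (Icc (0:ℝ) c).restrict S = fun t => ((e.symm t : Icc (0:ℝ) 1) : ℝ) := by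
      funext t
      have h1 : F ((e.symm t : Icc (0:ℝ) 1) : ℝ) = (t : ℝ) := by
        have h := congrArg Subtype.val (e.apply_symm_apply t)
        rw [hecoe] at h
        exact h
      have h2 : S ((t : ℝ)) = ((e.symm t : Icc (0:ℝ) 1) : ℝ) := by
        rw [← h1]; exact hSF _ (e.symm t).2
      exact h2
    change Continuous ((Icc (0:ℝ) c).restrict S)
    rw [hres]
    exact continuous_subtype_val.comp e.symm.continuous
  -- derivative of F
  have hderivF : ∀ x ∈ Ioo (0:ℝ) 1, HasDerivAt F (lemG x) x := by
    have hca : ∀ y ∈ Ioo (0:ℝ) 1, ContinuousAt lemG y := by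
      intro y hy
      have hbase : ContinuousAt (fun t : ℝ => 1 - t ^ 4) y := by fun_prop
      have hy4 : y ^ 4 < 1 := pow_lt_one₀ hy.1.le hy.2 (by norm_num)
      have hne : (1:ℝ) - y ^ 4 ≠ 0 := by linarith
      exact hbase.rpow_const (Or.inl hne)
    intro x hx
    exact intervalIntegral.integral_hasDerivAt_right
      (lemG_int' ⟨hx.1.le, hx.2.le⟩)
      (ContinuousAt.stronglyMeasurableAtFilter isOpen_Ioo hca x hx)
      (hca x hx)
  -- substitution
  have key : (∫ x in (0:ℝ)..1, lemG x • (S ∘ F) x) = ∫ u in (F 0)..(F 1), S u := by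
    apply intervalIntegral.integral_comp_smul_deriv'''
    · rw [uIcc_of_le (by norm_num : (0:ℝ) ≤ 1)]; exact contF
    · rw [show min (0:ℝ) 1 = 0 by norm_num, show max (0:ℝ) 1 = 1 by norm_num]
      exact fun x hx => (hderivF x hx).hasDerivWithinAt
    · rw [show min (0:ℝ) 1 = 0 by norm_num, show max (0:ℝ) 1 = 1 by norm_num]
      refine hScont.mono ?_
      rw [← himg]
      exact image_mono Ioo_subset_Icc_self
    · rw [uIcc_of_le (by norm_num : (0:ℝ) ≤ 1), himg]
      exact hScont.integrableOn_Icc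
    · rw [uIcc_of_le (by norm_num : (0:ℝ) ≤ 1)]
      have h1 : IntegrableOn (fun x => lemG x * x) (Icc (0:ℝ) 1) := by
        have := lemG_int.mul_continuousOn (g := fun x => x) continuous_id.continuousOn
        exact (intervalIntegrable_iff_integrableOn_Icc_of_le (by norm_num)).1 this
      refine h1.congr_fun (fun x hx => ?_) measurableSet_Icc
      simp only [Function.comp, smul_eq_mul, hSF x hx]
  have hLHS : (∫ x in (0:ℝ)..1, lemG x • (S ∘ F) x) = ∫ x in (0:ℝ)..1, lemG x * x := by
    refine intervalIntegral.integral_congr fun x hx => ?_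
    rw [uIcc_of_le (by norm_num : (0:ℝ) ≤ 1)] at hx
    simp only [Function.comp, smul_eq_mul, hSF x hx]
  -- evaluate ∫₀¹ x (1-x⁴)^(-1/2) dx = π/4 via the primitive (1/2) arcsin (x²)
  have hval : (∫ x in (0:ℝ)..1, lemG x * x) = Real.pi / 4 := by
    have hder : ∀ x ∈ Ioo (0:ℝ) 1,
        HasDerivWithinAt (fun y : ℝ => (1/2) * Real.arcsin (y ^ 2)) (lemG x * x) (Ioi x) x := by
      intro x hx
      have h1 : HasDerivAt (fun y : ℝ => y ^ 2) (2 * x) x := by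
        simpa using hasDerivAt_pow 2 x
      have hx1 : x ^ 2 ≠ 1 := by nlinarith [hx.1, hx.2]
      have hxn1 : x ^ 2 ≠ -1 := by nlinarith [hx.1]
      have h2 := Real.hasDerivAt_arcsin hxn1 hx1
      have h3 : HasDerivAt (fun y : ℝ => Real.arcsin (y ^ 2))
          (1 / Real.sqrt (1 - (x ^ 2) ^ 2) * (2 * x)) x := by
        exact HasDerivAt.comp (h₂ := Real.arcsin) (h := fun y : ℝ => y ^ 2) x h2 h1
      have h3' := h3.const_mul (1/2 : ℝ)
      have hx4 : x ^ 4 < 1 := pow_lt_one₀ hx.1.le hx.2 (by norm_num)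
      have hb : (0:ℝ) < 1 - x ^ 4 := by linarith
      have hvaleq : (1/2 : ℝ) * (1 / Real.sqrt (1 - (x ^ 2) ^ 2) * (2 * x)) = lemG x * x := by
        have h4 : (1:ℝ) - (x ^ 2) ^ 2 = 1 - x ^ 4 := by ring
        have h5 : lemG x = (Real.sqrt (1 - x ^ 4))⁻¹ := by
          rw [lemG, Real.rpow_neg hb.le, Real.sqrt_eq_rpow]
        have hs : Real.sqrt (1 - x ^ 4) ≠ 0 := (Real.sqrt_pos.mpr hb).ne'
        rw [h4, h5]
        field_simp
      rw [← hvaleq]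
      exact h3'.hasDerivWithinAt
    have hcont : ContinuousOn (fun y : ℝ => (1/2) * Real.arcsin (y ^ 2)) (Icc 0 1) :=
      (continuous_const.mul (Real.continuous_arcsin.comp (continuous_pow 2))).continuousOn
    have hint : IntervalIntegrable (fun x => lemG x * x) volume 0 1 :=
      lemG_int.mul_continuousOn continuous_id.continuousOn
    rw [intervalIntegral.integral_eq_sub_of_hasDeriv_right_of_le (by norm_num) hcont hder hint]
    norm_num [Real.arcsin_one, Real.arcsin_zero]
    ring
  calc ∫ t in (0:ℝ)..c, S t = ∫ t in (F 0)..(F 1), S t := by rw [hFc, hF0]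
    _ = ∫ x in (0:ℝ)..1, lemG x • (S ∘ F) x := key.symm
    _ = ∫ x in (0:ℝ)..1, lemG x * x := hLHS
    _ = Real.pi / 4 := hval
end

section
/- Let p, q ∈ (1,∞), n a nonnegative integer, and r ∈ (−1, q−1]. Set u = q/(r+1), so 1/u = (r+1)/q ∈ (0,1]. Then ∫₀^{π_{p,q}/2} sin_{p,q}^{qn+r}(t) dt = [u·(1/u)_n / (q·(1/p* + 1/u)_n)] · π_{p,u}/2, where for u = 1 one uses the convention π_{p,1} = 2p* = 2p/(p−1). -/
open Set MeasureTheory Filter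

-- integrability
lemma aux_int {p q : ℝ} (hp : 1 < p) (hq : 1 ≤ q) :
    IntegrableOn (fun t : ℝ => (1 - t ^ q) ^ (-(1 / p))) (Icc 0 1) := by
  have hmeas : Measurable fun t : ℝ => (1 - t ^ q) ^ (-(1 / p)) := by
    measurability
  have hg : IntegrableOn (fun t : ℝ => (1 - t) ^ (-(1 / p))) (Icc 0 1) := by
    have h1 : IntervalIntegrable (fun x : ℝ => x ^ (-(1 / p))) volume 0 1 :=
      intervalIntegral.intervalIntegrable_rpow' (by
        have : 1 / p < 1 := by
          rw [div_lt_one (by linarith)]; linarith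
        linarith)
    have h2 : IntervalIntegrable (fun x : ℝ => (1 - x) ^ (-(1 / p))) volume 0 1 := by
      have := h1.comp_sub_left 1
      simpa using this.symm
    rw [integrableOn_Icc_iff_integrableOn_Ioc]
    simpa [intervalIntegrable_iff_integrableOn_Ioc_of_le zero_le_one] using h2
  refine hg.integrable.mono' hmeas.aestronglyMeasurable ?_
  filter_upwards [ae_restrict_mem measurableSet_Icc] with t ht
  have ht0 : (0:ℝ) ≤ t := ht.1
  have ht1 : t ≤ 1 := ht.2
  have htq : t ^ q ≤ 1 := Real.rpow_le_one ht0 ht1 (by linarith)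
  rw [Real.norm_eq_abs, abs_of_nonneg (Real.rpow_nonneg (by linarith) _)]
  rcases eq_or_lt_of_le ht1 with h1 | h1
  · subst h1
    simp
  · have htlt : t ^ q ≤ t := by
      rcases eq_or_lt_of_le ht0 with h0 | h0
      · rw [← h0, Real.zero_rpow (by linarith)]
      · calc t ^ q ≤ t ^ (1:ℝ) :=
              Real.rpow_le_rpow_of_exponent_ge h0 ht1 hq
          _ = t := Real.rpow_one t
    exact Real.rpow_le_rpow_of_nonpos (by linarith) (by linarith)
      (neg_nonpos.mpr (by positivity))

lemma gArcsin_continuousOn {p q : ℝ} (hp : 1 < p) (hq : 1 ≤ q) :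
    ContinuousOn (gArcsin p q) (Icc 0 1) := by
  have := intervalIntegral.continuousOn_primitive_interval
    (a := (0:ℝ)) (b := 1) (μ := volume)
    (f := fun t : ℝ => (1 - t ^ q) ^ (-(1 / p))) (by
      rw [uIcc_of_le zero_le_one]; exact aux_int hp hq)
  rw [uIcc_of_le (zero_le_one (α := ℝ))] at this
  exact this

lemma gArcsin_zero (p q : ℝ) : gArcsin p q 0 = 0 := by
  simp [gArcsin]

lemma aux_int_sub {p q : ℝ} (hp : 1 < p) (hq : 1 ≤ q) {a b : ℝ}
    (ha : a ∈ Icc (0:ℝ) 1) (hb : b ∈ Icc (0:ℝ) 1) :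
    IntervalIntegrable (fun t : ℝ => (1 - t ^ q) ^ (-(1 / p))) volume a b := by
  have : IntegrableOn (fun t : ℝ => (1 - t ^ q) ^ (-(1 / p))) (uIcc a b) :=
    (aux_int hp hq).mono (uIcc_subset_Icc ha hb) le_rfl
  exact this.intervalIntegrable

lemma gArcsin_strictMonoOn {p q : ℝ} (hp : 1 < p) (hq : 1 ≤ q) :
    StrictMonoOn (gArcsin p q) (Icc 0 1) := by
  intro x hx y hy hxy
  have hsplit : gArcsin p q x + ∫ t in x..y, (1 - t ^ q) ^ (-(1 / p)) = gArcsin p q y :=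
    intervalIntegral.integral_add_adjacent_intervals
      (aux_int_sub hp hq (left_mem_Icc.mpr zero_le_one) hx)
      (aux_int_sub hp hq hx hy)
  have hpos : 0 < ∫ t in x..y, (1 - t ^ q) ^ (-(1 / p)) := by
    refine intervalIntegral.intervalIntegral_pos_of_pos_on
      (aux_int_sub hp hq hx hy) (fun t ht => ?_) hxy
    have ht0 : 0 ≤ t := le_trans hx.1 ht.1.le
    have ht1 : t < 1 := lt_of_lt_of_le ht.2 hy.2
    have : t ^ q < 1 := by
      calc t ^ q ≤ t := by
            rcases eq_or_lt_of_le ht0 with h0 | h0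
            · rw [← h0, Real.zero_rpow (by linarith)]
            · calc t ^ q ≤ t ^ (1:ℝ) := Real.rpow_le_rpow_of_exponent_ge h0 ht1.le hq
                _ = t := Real.rpow_one t
        _ < 1 := ht1
    exact Real.rpow_pos_of_pos (by linarith) _
  linarith

lemma gArcsin_hasDerivAt {p q : ℝ} (hp : 1 < p) (hq : 1 ≤ q) {x : ℝ} (hx : x ∈ Ioo (0:ℝ) 1) :
    HasDerivAt (gArcsin p q) ((1 - x ^ q) ^ (-(1 / p))) x := by
  have hxq : x ^ q < 1 := by
    calc x ^ q ≤ x ^ (1:ℝ) := Real.rpow_le_rpow_of_exponent_ge hx.1 hx.2.le hq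
      _ = x := Real.rpow_one x
      _ < 1 := hx.2
  have hcont : ContinuousAt (fun t : ℝ => (1 - t ^ q) ^ (-(1 / p))) x := by
    have h1 : ContinuousAt (fun t : ℝ => 1 - t ^ q) x :=
      continuousAt_const.sub (Real.continuousAt_rpow_const x q (Or.inl hx.1.ne'))
    exact (Real.continuousAt_rpow_const _ _ (Or.inl (by linarith))).comp h1
  have hmeas : Measurable fun t : ℝ => (1 - t ^ q) ^ (-(1 / p)) := by measurability
  exact intervalIntegral.integral_hasDerivAt_right
    (aux_int_sub hp hq (left_mem_Icc.mpr zero_le_one) (Ioo_subset_Icc_self hx))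
    (hmeas.stronglyMeasurable.stronglyMeasurableAtFilter) hcont

lemma gArcsin_image {p q : ℝ} (hp : 1 < p) (hq : 1 ≤ q) :
    gArcsin p q '' Ioo 0 1 = Ioo 0 (gPi p q / 2) := by
  have h2 : gPi p q / 2 = gArcsin p q 1 := by rw [gPi]; ring
  apply Subset.antisymm
  · have := (gArcsin_strictMonoOn hp hq).image_Ioo_subset
    rw [gArcsin_zero] at this
    rwa [h2]
  · rw [h2]
    have := intermediate_value_Ioo (zero_le_one (α := ℝ)) (gArcsin_continuousOn hp hq)
    rwa [gArcsin_zero] at this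

lemma key_subst {p q : ℝ} (hp : 1 < p) (hq : 1 ≤ q) {S : ℝ → ℝ} (hS : IsGSin p q S)
    (α : ℝ) :
    ∫ t in (0:ℝ)..(gPi p q / 2), S t ^ α
      = ∫ x in Ioo (0:ℝ) 1, x ^ α * (1 - x ^ q) ^ (-(1 / p)) := by
  have h2 : gPi p q / 2 = gArcsin p q 1 := by rw [gPi]; ring
  have hpos : (0:ℝ) < gPi p q / 2 := by
    rw [h2, ← gArcsin_zero p q]
    exact gArcsin_strictMonoOn hp hq (left_mem_Icc.mpr zero_le_one)
      (right_mem_Icc.mpr zero_le_one) zero_lt_one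
  rw [intervalIntegral.integral_of_le hpos.le, MeasureTheory.integral_Ioc_eq_integral_Ioo,
    ← gArcsin_image hp hq]
  rw [MeasureTheory.integral_image_eq_integral_abs_deriv_smul measurableSet_Ioo
    (fun x hx => (gArcsin_hasDerivAt hp hq hx).hasDerivWithinAt)
    ((gArcsin_strictMonoOn hp hq).injOn.mono Ioo_subset_Icc_self) (fun y => S y ^ α)]
  refine MeasureTheory.setIntegral_congr_fun measurableSet_Ioo (fun x hx => ?_)
  have hxq : x ^ q < 1 := by
    calc x ^ q ≤ x ^ (1:ℝ) := Real.rpow_le_rpow_of_exponent_ge hx.1 hx.2.le hq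
      _ = x := Real.rpow_one x
      _ < 1 := hx.2
  rw [hS x (Ioo_subset_Icc_self hx), smul_eq_mul,
    abs_of_pos (Real.rpow_pos_of_pos (by linarith) _), mul_comm]

lemma pow_subst {w : ℝ} (hw : 0 < w) (G : ℝ → ℝ) :
    ∫ s in Ioo (0:ℝ) 1, G s = ∫ x in Ioo (0:ℝ) 1, (w * x ^ (w - 1)) * G (x ^ w) := by
  have himg : (fun x : ℝ => x ^ w) '' Ioo 0 1 = Ioo 0 1 := by
    apply Subset.antisymm
    · rintro _ ⟨x, hx, rfl⟩
      exact ⟨Real.rpow_pos_of_pos hx.1 _, Real.rpow_lt_one hx.1.le hx.2 hw⟩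
    · rintro s hs
      refine ⟨s ^ (1 / w), ⟨Real.rpow_pos_of_pos hs.1 _,
        Real.rpow_lt_one hs.1.le hs.2 (by positivity)⟩, ?_⟩
      show (s ^ (1 / w)) ^ w = s
      rw [← Real.rpow_mul hs.1.le, one_div_mul_cancel hw.ne', Real.rpow_one]
  have := MeasureTheory.integral_image_eq_integral_abs_deriv_smul (s := Ioo (0:ℝ) 1) (f := fun x : ℝ => x ^ w)
    (f' := fun x : ℝ => w * x ^ (w - 1)) measurableSet_Ioo
    (fun x hx => (Real.hasDerivAt_rpow_const (Or.inl hx.1.ne')).hasDerivWithinAt)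
    (fun x hx y hy hxy => by
      by_contra hne
      rcases lt_or_gt_of_ne hne with h | h
      · exact absurd hxy (Real.rpow_lt_rpow hx.1.le h hw).ne
      · exact absurd hxy.symm (Real.rpow_lt_rpow hy.1.le h hw).ne) G
  rw [himg] at this
  rw [this]
  refine MeasureTheory.setIntegral_congr_fun measurableSet_Ioo (fun x hx => ?_)
  rw [smul_eq_mul, abs_of_pos (mul_pos hw (Real.rpow_pos_of_pos hx.1 _))]

lemma realBeta {a b : ℝ} (ha : 0 < a) (hb : 0 < b) :
    ∫ s in Ioo (0:ℝ) 1, s ^ (a - 1) * (1 - s) ^ (b - 1)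
      = Real.Gamma a * Real.Gamma b / Real.Gamma (a + b) := by
  set I : ℝ := ∫ s in Ioo (0:ℝ) 1, s ^ (a - 1) * (1 - s) ^ (b - 1) with hI
  have hbeta : Complex.betaIntegral a b = (I : ℂ) := by
    rw [Complex.betaIntegral, intervalIntegral.integral_of_le zero_le_one,
      MeasureTheory.integral_Ioc_eq_integral_Ioo]
    rw [show (I : ℂ) = ∫ s in Ioo (0:ℝ) 1, ((s ^ (a - 1) * (1 - s) ^ (b - 1) : ℝ) : ℂ) from
      (integral_ofReal).symm]
    refine MeasureTheory.setIntegral_congr_fun measurableSet_Ioo (fun x hx => ?_)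
    rw [Complex.ofReal_mul, Complex.ofReal_cpow hx.1.le, Complex.ofReal_cpow (by linarith [hx.2] : (0:ℝ) ≤ 1 - x)]
    push_cast
    ring
  have hg := Complex.Gamma_mul_Gamma_eq_betaIntegral
    (s := (a:ℂ)) (t := (b:ℂ)) (by simpa using ha) (by simpa using hb)
  rw [hbeta] at hg
  have h2 : Real.Gamma a * Real.Gamma b = Real.Gamma (a + b) * I := by
    rw [show ((a:ℂ) + b) = ((a + b : ℝ) : ℂ) by push_cast; ring] at hg
    simp only [Complex.Gamma_ofReal] at hg
    exact_mod_cast hg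
  have h3 : Real.Gamma (a + b) ≠ 0 := (Real.Gamma_pos_of_pos (by linarith)).ne'
  field_simp
  linarith [h2]

lemma pochEval_pos {a : ℝ} (ha : 0 < a) (n : ℕ) : 0 < (ascPochhammer ℝ n).eval a := by
  induction n with
  | zero => simp
  | succ k ih =>
    rw [ascPochhammer_succ_right]
    simp only [Polynomial.eval_mul, Polynomial.eval_add, Polynomial.eval_X,
      Polynomial.eval_natCast]
    exact mul_pos ih (by positivity)

lemma Gamma_poch {a : ℝ} (ha : 0 < a) (n : ℕ) :
    Real.Gamma (a + n) = (ascPochhammer ℝ n).eval a * Real.Gamma a := by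
  induction n with
  | zero => simp
  | succ k ih =>
    have h1 : a + (k + 1 : ℕ) = (a + k) + 1 := by push_cast; ring
    rw [h1, Real.Gamma_add_one (by positivity), ih, ascPochhammer_succ_right]
    simp only [Polynomial.eval_mul, Polynomial.eval_add, Polynomial.eval_X,
      Polynomial.eval_natCast]
    ring

lemma master {p w β : ℝ} (hp : 1 < p) (hw : 0 < w) (hβ : -1 < β) :
    ∫ x in Ioo (0:ℝ) 1, x ^ β * (1 - x ^ w) ^ (-(1 / p))
      = (1 / w) * (Real.Gamma ((β + 1) / w) * Real.Gamma (1 - 1 / p)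
          / Real.Gamma ((β + 1) / w + (1 - 1 / p))) := by
  have hp0 : (0:ℝ) < p := by linarith
  have hc : 0 < 1 - 1 / p := by
    have : 1 / p < 1 := by rw [div_lt_one hp0]; linarith
    linarith
  have hA : 0 < (β + 1) / w := div_pos (by linarith) hw
  have h := pow_subst hw (fun s => (1 / w) * (s ^ ((β + 1) / w - 1) * (1 - s) ^ (-(1 / p))))
  have hL : ∫ s in Ioo (0:ℝ) 1, (1 / w) * (s ^ ((β + 1) / w - 1) * (1 - s) ^ (-(1 / p)))
      = (1 / w) * (Real.Gamma ((β + 1) / w) * Real.Gamma (1 - 1 / p)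
          / Real.Gamma ((β + 1) / w + (1 - 1 / p))) := by
    rw [MeasureTheory.integral_const_mul]
    congr 1
    have := realBeta hA hc
    rw [show (1 - 1 / p) - 1 = -(1 / p) by ring] at this
    exact this
  rw [← hL, h]
  refine MeasureTheory.setIntegral_congr_fun measurableSet_Ioo (fun x hx => ?_)
  have hx0 := hx.1
  have hxw : (x ^ w) ^ ((β + 1) / w - 1) = x ^ (β + 1 - w) := by
    rw [← Real.rpow_mul hx0.le]
    congr 1
    field_simp
  rw [hxw]
  rw [show w * x ^ (w - 1) * (1 / w * (x ^ (β + 1 - w) * (1 - x ^ w) ^ (-(1 / p))))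
      = (x ^ (w - 1) * x ^ (β + 1 - w)) * (1 - x ^ w) ^ (-(1 / p)) by field_simp,
    ← Real.rpow_add hx0]
  congr 2
  ring

/-- Theorem 3.4, formula (3.3) (Wallis-type formula for `sin_{p,q}`): for
`r ∈ (-1, q-1]` and `1/u = (r+1)/q`,
`∫₀^{π_{p,q}/2} sin_{p,q}^{qn+r} t dt = (u (1/u)ₙ)/(q (1/p* + 1/u)ₙ) · π_{p,u}/2`.
(For `u = 1` one has `gPi p 1 = 2∫₀¹(1-t)^{-1/p} dt = 2p/(p-1) = 2p*`, the paper's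
convention `π_{p,1} := 2p*`.) -/
theorem stmt_8 (p q r : ℝ) (n : ℕ) (hp : 1 < p) (hq : 1 < q)
    (hr : r ∈ Ioc (-1 : ℝ) (q - 1))
    (u : ℝ) (hu : u = q / (r + 1))
    (S : ℝ → ℝ) (hS : IsGSin p q S) :
    ∫ t in (0:ℝ)..(gPi p q / 2), S t ^ (q * (n : ℝ) + r) =
      (u * (ascPochhammer ℝ n).eval (1 / u)) /
          (q * (ascPochhammer ℝ n).eval (1 / (p / (p - 1)) + 1 / u)) *
        (gPi p u / 2) := by
  have hq0 : (0:ℝ) < q := by linarith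
  have hr1 : (0:ℝ) < r + 1 := by linarith [hr.1]
  have hu0 : (0:ℝ) < u := by rw [hu]; positivity
  have h1u : 1 / u = (r + 1) / q := by rw [hu, one_div_div]
  have hc : 0 < 1 - 1 / p := by
    have : 1 / p < 1 := by rw [div_lt_one (by linarith)]; linarith
    linarith
  have hpstar : 1 / (p / (p - 1)) = 1 - 1 / p := by
    rw [one_div_div]
    field_simp
  have hα : -1 < q * (n : ℝ) + r := by
    have : (0:ℝ) ≤ q * n := by positivity
    linarith [hr.1]
  -- LHS
  have hLHS : ∫ t in (0:ℝ)..(gPi p q / 2), S t ^ (q * (n : ℝ) + r)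
      = (1 / q) * (Real.Gamma ((n : ℝ) + 1 / u) * Real.Gamma (1 - 1 / p)
          / Real.Gamma ((n : ℝ) + 1 / u + (1 - 1 / p))) := by
    rw [key_subst hp hq.le hS, master hp hq0 hα,
      show (q * (n : ℝ) + r + 1) / q = (n : ℝ) + 1 / u by
        rw [h1u]; field_simp; ring]
  -- RHS : gPi p u / 2
  have hRHS : gPi p u / 2 = (1 / u) * (Real.Gamma (1 / u) * Real.Gamma (1 - 1 / p)
      / Real.Gamma (1 / u + (1 - 1 / p))) := by
    have h2 : gPi p u / 2 = gArcsin p u 1 := by rw [gPi]; ring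
    rw [h2, gArcsin, intervalIntegral.integral_of_le zero_le_one,
      MeasureTheory.integral_Ioc_eq_integral_Ioo]
    have hcong : ∫ x in Ioo (0:ℝ) 1, (1 - x ^ u) ^ (-(1 / p))
        = ∫ x in Ioo (0:ℝ) 1, x ^ (0:ℝ) * (1 - x ^ u) ^ (-(1 / p)) := by
      refine MeasureTheory.setIntegral_congr_fun measurableSet_Ioo (fun x hx => ?_)
      rw [Real.rpow_zero, one_mul]
    rw [hcong, master hp hu0 (by norm_num), show ((0:ℝ) + 1) / u = 1 / u by norm_num]
  rw [hLHS, hRHS, hpstar]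
  have h1u0 : 0 < 1 / u := by positivity
  -- Gamma Pochhammer rewrites
  have hg1 : Real.Gamma ((n : ℝ) + 1 / u)
      = (ascPochhammer ℝ n).eval (1 / u) * Real.Gamma (1 / u) := by
    rw [add_comm]; exact Gamma_poch h1u0 n
  have hg2 : Real.Gamma ((n : ℝ) + 1 / u + (1 - 1 / p))
      = (ascPochhammer ℝ n).eval (1 - 1 / p + 1 / u)
          * Real.Gamma (1 / u + (1 - 1 / p)) := by
    rw [show (n : ℝ) + 1 / u + (1 - 1 / p) = (1 / u + (1 - 1 / p)) + n by ring,
      Gamma_poch (by positivity) n, add_comm (1/u)]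
  rw [hg1, hg2]
  have hP2 : 0 < (ascPochhammer ℝ n).eval (1 - 1 / p + 1 / u) :=
    pochEval_pos (by positivity) n
  have hΓ : 0 < Real.Gamma (1 / u + (1 - 1 / p)) :=
    Real.Gamma_pos_of_pos (by positivity)
  set P1 := (ascPochhammer ℝ n).eval (1 / u) with hP1d
  set P2 := (ascPochhammer ℝ n).eval (1 - 1 / p + 1 / u) with hP2d
  set G1 := Real.Gamma (1 / u) with hG1d
  set Gc := Real.Gamma (1 - 1 / p) with hGcd
  set G2 := Real.Gamma (1 / u + (1 - 1 / p)) with hG2d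
  have h1 : u ≠ 0 := hu0.ne'
  have h2 : q ≠ 0 := hq0.ne'
  have h3 : P2 ≠ 0 := hP2.ne'
  have h4 : G2 ≠ 0 := hΓ.ne'
  field_simp
end
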